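/- arXiv:2402.07022 — 3 statements merged into one kernel-verified Lean document; each statement's English description precedes it below -/
import Mathlib

section
/- (Proposition 1, part 2.) Suppose the subjects known to be cured are exactly those whose observed time exceeds a known fixed cure threshold d: there is an index n₁ ≤ n such that for i ≤ n₁ one has T_(i) < d and ξ_iν_i = 0, while for i > n₁ one has T_(i) ≥ d, δ_i = 0 and ξ_iν_i = 1. Then for every t the proposed product-limit estimator coincides with Beran's estimator: Ŝ^c(t) = Ŝ(t). -/
open scoped Classical
open Finset

noncomputable section

/-- The proposed product-limit estimator `Ŝ^c(t)` in the mixture cure model with partially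
known cure status: `B i` are the (positive) weights, `T i` the ordered observed times
(values in `ℝ ∪ {+∞}` are allowed, hence `EReal`), `d i` the uncensored-event indicator and
`c i` the indicator of being censored and known to be cured. -/
def Shatc (n : ℕ) (B : Fin n → ℝ) (T : Fin n → EReal) (d c : Fin n → Bool) (t : ℝ) : ℝ :=
  ∏ i : Fin n,
    (1 - (if d i = true ∧ T i ≤ (t : EReal) then B i else 0) /
      ((∑ j ∈ univ.filter fun j => i ≤ j, B j) +
        ∑ j ∈ univ.filter fun j => j < i ∧ c j = true, B j))

/-- Beran's estimator `Ŝ(t)`, which ignores the cure status information. -/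
def ShatBeran (n : ℕ) (B : Fin n → ℝ) (T : Fin n → EReal) (d : Fin n → Bool) (t : ℝ) : ℝ :=
  ∏ i : Fin n,
    (1 - (if d i = true ∧ T i ≤ (t : EReal) then B i else 0) /
      ∑ j ∈ univ.filter fun j => i ≤ j, B j)

/-- Proposition 1, part 2: if the subjects known to be cured are exactly those whose observed
time exceeds a known fixed cure threshold `dth` (the first `n₁` ordered observations have
`T_(i) < dth` and unknown/uncured status, the remaining ones have `T_(i) ≥ dth`, are censored
and known to be cured), then the proposed product-limit estimator coincides with Beran's
estimator. -/
theorem stmt8 (n : ℕ) (B : Fin n → ℝ) (hB : ∀ i, 0 < B i)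
    (T : Fin n → EReal) (hT : Monotone T) (d c : Fin n → Bool)
    (dth : ℝ) (n₁ : ℕ) (hn₁ : n₁ ≤ n)
    (hlow : ∀ i : Fin n, (i : ℕ) < n₁ → T i < (dth : EReal) ∧ c i = false)
    (hhigh : ∀ i : Fin n, n₁ ≤ (i : ℕ) → (dth : EReal) ≤ T i ∧ d i = false ∧ c i = true)
    (t : ℝ) :
    Shatc n B T d c t = ShatBeran n B T d t := by
  unfold Shatc ShatBeran
  apply Finset.prod_congr rfl
  intro i _
  by_cases h : d i = true ∧ T i ≤ (t : EReal)
  · rw [if_pos h]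
    have hi : (i : ℕ) < n₁ := by
      by_contra hni
      exact absurd h.1 (by simp [(hhigh i (le_of_not_gt hni)).2.1])
    have hz : (∑ j ∈ univ.filter fun j => j < i ∧ c j = true, B j) = 0 := by
      apply Finset.sum_eq_zero
      intro j hj
      simp only [Finset.mem_filter] at hj
      exact absurd hj.2.2 (by simp [(hlow j (lt_of_lt_of_le hj.2.1 (le_of_lt hi))).2])
    rw [hz, add_zero]
  · rw [if_neg h, zero_div, zero_div]
end
end

section
/- (Proposition 1, part 3.) Suppose there is no censoring: δ_i = 1 for all i, the observed times are the ordered lifetimes Y_(1) ≤ … ≤ Y_(n) taking values in ℝ ∪ {+∞} (cured subjects have Y_(i) = +∞ and known-cure indicator ξ_iν_i = 1(Y_(i) = +∞)), and the weights satisfy ∑_{i=1}^n B_i = 1 with each B_i > 0. Then for every real t, ∏_{i=1}^n {1 − B_i 1(Y_(i) ≤ t)/(∑_{j=i}^n B_j + ∑_{j=1}^{i−1} B_j 1(Y_(j) = +∞))} = ∑_{i=1}^n B_i 1(Y_(i) > t); that is, the proposed estimator reduces to the kernel-type (Nadaraya–Watson) estimator of the conditional survival function. -/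
open scoped Classical
open Finset

noncomputable section

/-- Proposition 1, part 3: when there is no censoring (`δᵢ = 1` for all `i`, the observed
times being the ordered lifetimes `Y_(1) ≤ … ≤ Y_(n)` with values in `ℝ ∪ {+∞}`, cured
subjects having `Y_(i) = +∞` and known-cure indicator `1(Y_(i) = +∞)`), and the weights
add up to one, the proposed product-limit estimator reduces to the kernel-type
(Nadaraya–Watson) estimator of the conditional survival function. -/
theorem stmt9 (n : ℕ) (B : Fin n → ℝ) (hB : ∀ i, 0 < B i) (hB1 : ∑ i : Fin n, B i = 1)
    (Y : Fin n → EReal) (hY : Monotone Y) (t : ℝ) :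
    (∏ i : Fin n,
      (1 - (if Y i ≤ (t : EReal) then B i else 0) /
        ((∑ j ∈ univ.filter fun j => i ≤ j, B j) +
          ∑ j ∈ univ.filter fun j => j < i ∧ Y j = (⊤ : EReal), B j)))
      = ∑ i ∈ univ.filter fun i => (t : EReal) < Y i, B i := by
  set S : ℕ → ℝ := fun m => ∑ j ∈ univ.filter (fun j : Fin n => m ≤ (j : ℕ)), B j with hS
  have hS0 : S 0 = 1 := by
    have : univ.filter (fun j : Fin n => 0 ≤ (j : ℕ)) = univ := by
      apply filter_true_of_mem; intro x _; omega
    simp only [hS, this, hB1]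
  have hSstep : ∀ m (hm : m < n), S m = B ⟨m, hm⟩ + S (m + 1) := by
    intro m hm
    have hset : univ.filter (fun j : Fin n => m ≤ (j : ℕ)) =
        insert ⟨m, hm⟩ (univ.filter (fun j : Fin n => m + 1 ≤ (j : ℕ))) := by
      ext j
      simp only [mem_filter, mem_univ, true_and, mem_insert]
      constructor
      · intro h
        rcases eq_or_lt_of_le h with h' | h'
        · left; exact Fin.ext h'.symm
        · right; omega
      · rintro (rfl | h)
        · simp
        · omega
    have hnotmem : (⟨m, hm⟩ : Fin n) ∉ univ.filter (fun j : Fin n => m + 1 ≤ (j : ℕ)) := by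
      simp
    simp only [hS, hset, sum_insert hnotmem]
  have hSpos : ∀ m, m < n → 0 < S m := by
    intro m hm
    apply sum_pos (fun i _ => hB i)
    exact ⟨⟨m, hm⟩, by simp⟩
  set k := (univ.filter fun i : Fin n => Y i ≤ (t : EReal)).card with hkdef
  have hkn : k ≤ n := by
    calc k ≤ (univ : Finset (Fin n)).card := card_filter_le _ _
    _ = n := by simp
  have hk : ∀ i : Fin n, (Y i ≤ (t : EReal)) ↔ (i : ℕ) < k := by
    intro i
    constructor
    · intro h
      have hsub : Finset.Iic i ⊆ univ.filter fun i : Fin n => Y i ≤ (t : EReal) := by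
        intro j hj
        simp only [mem_filter, mem_univ, true_and]
        exact le_trans (hY (mem_Iic.mp hj)) h
      have := card_le_card hsub
      rw [Fin.card_Iic] at this
      omega
    · intro h
      by_contra hc
      have hsub : (univ.filter fun i : Fin n => Y i ≤ (t : EReal)) ⊆ Finset.Iio i := by
        intro j hj
        simp only [mem_filter, mem_univ, true_and] at hj
        rw [mem_Iio]
        by_contra hji
        exact hc (le_trans (hY (not_lt.mp hji)) hj)
      have := card_le_card hsub
      rw [Fin.card_Iio] at this
      omega
  -- factor rewriting
  have hfac : ∀ i : Fin n,
      (1 - (if Y i ≤ (t : EReal) then B i else 0) /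
        ((∑ j ∈ univ.filter fun j => i ≤ j, B j) +
          ∑ j ∈ univ.filter fun j => j < i ∧ Y j = (⊤ : EReal), B j))
      = if (i : ℕ) < k then S ((i : ℕ) + 1) / S (i : ℕ) else 1 := by
    intro i
    by_cases h : Y i ≤ (t : EReal)
    · rw [if_pos h, if_pos ((hk i).mp h)]
      have hcure : (univ.filter fun j : Fin n => j < i ∧ Y j = (⊤ : EReal)) = ∅ := by
        apply filter_false_of_mem
        intro j _
        rintro ⟨hji, hjtop⟩
        have : (⊤ : EReal) ≤ Y i := hjtop ▸ hY hji.le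
        have : Y i = ⊤ := top_le_iff.mp this
        rw [this] at h
        exact absurd h (not_le.mpr (EReal.coe_lt_top t))
      have hfirst : (∑ j ∈ univ.filter fun j => i ≤ j, B j) = S (i : ℕ) := by
        apply sum_congr _ (fun _ _ => rfl)
        ext j
        simp only [mem_filter, mem_univ, true_and, Fin.le_def]
      rw [hcure, hfirst, sum_empty, add_zero]
      have hstep := hSstep (i : ℕ) i.isLt
      have hBi : B ⟨(i : ℕ), i.isLt⟩ = B i := by congr
      have hne : S (i : ℕ) ≠ 0 := (hSpos _ i.isLt).ne'
      have hS1 : S ((i : ℕ) + 1) = S (i : ℕ) - B i := by rw [hBi] at hstep; linarith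
      rw [hS1, sub_div, div_self hne]
    · rw [if_neg h, if_neg (fun hc => h ((hk i).mpr hc)), zero_div, sub_zero]
  rw [Finset.prod_congr rfl (fun i _ => hfac i)]
  -- reindex to range n
  have hprod : (∏ i : Fin n, if (i : ℕ) < k then S ((i : ℕ) + 1) / S (i : ℕ) else 1)
      = ∏ m ∈ Finset.range n, (if m < k then S (m + 1) / S m else 1) :=
    Fin.prod_univ_eq_prod_range (fun m => if m < k then S (m + 1) / S m else 1) n
  rw [hprod]
  have hsubset : (∏ m ∈ Finset.range n, (if m < k then S (m + 1) / S m else 1))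
      = ∏ m ∈ Finset.range k, (if m < k then S (m + 1) / S m else 1) := by
    symm
    apply prod_subset (range_subset_range.mpr hkn)
    intro m _ hm
    rw [mem_range, not_lt] at hm
    rw [if_neg (not_lt.mpr hm)]
  rw [hsubset, Finset.prod_congr rfl (fun m hm => if_pos (mem_range.mp hm))]
  -- telescoping
  have tel : ∀ K, K ≤ n → (∏ m ∈ Finset.range K, S (m + 1) / S m) = S K := by
    intro K
    induction K with
    | zero => intro _; simp [hS0]
    | succ K ih =>
      intro hK
      rw [prod_range_succ, ih (by omega)]
      have hne : S K ≠ 0 := (hSpos K (by omega)).ne'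
      field_simp
  rw [tel k hkn]
  -- RHS
  have : (univ.filter fun i : Fin n => (t : EReal) < Y i)
      = univ.filter fun i : Fin n => k ≤ (i : ℕ) := by
    ext i
    simp only [mem_filter, mem_univ, true_and]
    rw [← not_le, hk i, not_lt]
  rw [this]
end
end

section
/- (Proposition 1, part 4.) In the unconditional setting with equal weights 1/n, suppose a subject is known to be cured exactly when its observed time exceeds a known fixed time d: there is n₁ ≤ n (with m = n − n₁ cured) such that for i ≤ n₁ one has T_(i) < d and ξ_iν_i = 0, and for i > n₁ one has T_(i) ≥ d, δ_i = 0 and ξ_iν_i = 1. Then for every t, Ŝ_n^c(t) = ∏_{i=1}^n {1 − δ_i 1(T_(i) ≤ t)/(n − i + 1 + ∑_{j=1}^{i−1} 1(ξ_jν_j = 1))} equals ∏_{i=1}^n {1 − δ_i 1(T_(i) ≤ t)/(n − i + 1)}, the generalized maximum likelihood estimator of Laska and Meisner. -/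
open scoped Classical
open Finset

noncomputable section

/-- Proposition 1, part 4: in the unconditional setting (all Nadaraya–Watson weights equal
to `1/n`), if a subject is known to be cured exactly when its observed time exceeds a known
fixed time `dth` (the first `n₁` ordered observations have `T_(i) < dth` and unknown/uncured
status, the remaining `m = n − n₁` ones have `T_(i) ≥ dth`, are censored and known to be
cured), then the proposed estimator
`Ŝ_n^c(t) = ∏ᵢ {1 − δᵢ1(T_(i) ≤ t)/(n − i + 1 + ∑_{j<i} 1(ξⱼνⱼ = 1))}`
coincides with the generalized maximum likelihood estimator of Laska and Meisner
`∏ᵢ {1 − δᵢ1(T_(i) ≤ t)/(n − i + 1)}`.  (Here indices are `0`-based, so the paper's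
`n − i + 1` reads `n − i`.) -/
theorem stmt10 (n : ℕ) (T : Fin n → EReal) (hT : Monotone T) (d c : Fin n → Bool)
    (dth : ℝ) (n₁ : ℕ) (hn₁ : n₁ ≤ n)
    (hlow : ∀ i : Fin n, (i : ℕ) < n₁ → T i < (dth : EReal) ∧ c i = false)
    (hhigh : ∀ i : Fin n, n₁ ≤ (i : ℕ) → (dth : EReal) ≤ T i ∧ d i = false ∧ c i = true)
    (t : ℝ) :
    (∏ i : Fin n,
      (1 - (if d i = true ∧ T i ≤ (t : EReal) then (1 : ℝ) else 0) /
        ((n - (i : ℕ) + (univ.filter fun j => j < i ∧ c j = true).card : ℕ) : ℝ)))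
    = ∏ i : Fin n,
      (1 - (if d i = true ∧ T i ≤ (t : EReal) then (1 : ℝ) else 0) /
        ((n - (i : ℕ) : ℕ) : ℝ)) := by
  apply Finset.prod_congr rfl
  intro i _
  by_cases h : (i : ℕ) < n₁
  · have hcard : (univ.filter fun j => j < i ∧ c j = true).card = 0 := by
      rw [Finset.card_eq_zero, Finset.filter_eq_empty_iff]
      intro j _
      rintro ⟨hji, hcj⟩
      have := (hlow j (lt_trans hji h)).2
      simp [this] at hcj
    rw [hcard, add_zero]
  · have hd := (hhigh i (le_of_not_gt h)).2.1
    simp [hd]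
end
end
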